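/- Let ρ be a probabilistic choice function identified by the Fréchet–Hoeffding lower bound W, with identifying distribution π_W. Suppose that for every pair i, j ∈ {1,…,n} there exists k ∈ {1,…,n} \ {i, j} such that ρ_k(y) < 1 for every y ∈ S_k (i.e., condition II fails). Let α, β ∈ supp(π_W) and i, j ∈ {1,…,n} be such that β_i < α_i and α_j < β_j. Then there exist γ ∈ supp(π_W) and k* ∈ {1,…,n} such that: (1) γ_{k*} ≠ α_{k*} and α_{k*} = β_{k*}; and (2) if γ_{k*} < α_{k*} then α and β are each 1-mistake away from s̄^ρ, while if α_{k*} < γ_{k*} then α and β are each 1-mistake away from s̲^ρ. -/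
import Mathlib


open Finset

variable {n : ℕ} {S : Fin n → Type*} [∀ i, Fintype (S i)] [∀ i, LinearOrder (S i)]

/-- `ρ` is a probabilistic choice function: each `ρ i` is a probability distribution on `S i`. -/
def IsPCF (ρ : ∀ i, S i → ℝ) : Prop :=
  (∀ i (x : S i), 0 ≤ ρ i x) ∧ ∀ i, ∑ x : S i, ρ i x = 1

/-- The cumulative choice function `P_i(x) = ∑_{y ≤ x} ρ_i(y)`. -/
noncomputable def cumul (ρ : ∀ i, S i → ℝ) (i : Fin n) (x : S i) : ℝ :=
  ∑ y ∈ Finset.univ.filter (fun y => y ≤ x), ρ i y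

/-- `π` is a probability distribution over choice types. -/
def IsDist (π : (∀ i, S i) → ℝ) : Prop :=
  (∀ s, 0 ≤ π s) ∧ ∑ s : ∀ i, S i, π s = 1

/-- `π` represents `ρ`: the marginals of `π` agree with `ρ`. -/
def Represents (π : (∀ i, S i) → ℝ) (ρ : ∀ i, S i → ℝ) : Prop :=
  ∀ i (x : S i), ∑ s ∈ Finset.univ.filter (fun s : ∀ i, S i => s i = x), π s = ρ i x

/-- `π(⊴ s)`: total mass on choice types componentwise below `s`. -/
noncomputable def cdfLe (π : (∀ i, S i) → ℝ) (s : ∀ i, S i) : ℝ :=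
  ∑ t ∈ Finset.univ.filter (fun t : ∀ i, S i => ∀ i, t i ≤ s i), π t

section Aux

variable (ρ : ∀ i, S i → ℝ) (πW : (∀ i, S i) → ℝ)

/-- marginal cumulative sum identity -/
lemma fiber_sum_le (hrep : Represents πW ρ) (l : Fin n) (x : S l) :
    ∑ t ∈ univ.filter (fun t : ∀ i, S i => t l ≤ x), πW t = cumul ρ l x := by
  classical
  have h := Finset.sum_fiberwise_of_maps_to
    (s := univ.filter (fun t : ∀ i, S i => t l ≤ x))
    (t := univ.filter (fun y : S l => y ≤ x)) (g := fun t : ∀ i, S i => t l)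
    (fun t ht => by simpa using (Finset.mem_filter.mp ht).2) πW
  rw [← h, cumul]
  refine Finset.sum_congr rfl fun y hy => ?_
  have hyx : y ≤ x := by simpa using hy
  rw [← hrep l y]
  refine Finset.sum_congr ?_ fun _ _ => rfl
  ext t
  simp only [Finset.mem_filter, Finset.mem_univ, true_and]
  constructor
  · rintro ⟨-, h2⟩
    exact h2
  · intro h2
    exact ⟨h2.le.trans hyx, h2⟩

lemma rho_pos_of_supp (hdist : IsDist πW) (hrep : Represents πW ρ) {δ : ∀ i, S i}
    (hδ : 0 < πW δ) (l : Fin n) : 0 < ρ l (δ l) := by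
  rw [← hrep l (δ l)]
  refine lt_of_lt_of_le hδ (Finset.single_le_sum (fun t _ => hdist.1 t) ?_)
  simp

lemma exists_mem_supp (hdist : IsDist πW) (hrep : Represents πW ρ) {l : Fin n} {x : S l}
    (hx : 0 < ρ l x) : ∃ δ : ∀ i, S i, 0 < πW δ ∧ δ l = x := by
  by_contra hcon
  push_neg at hcon
  have h0 : ∑ t ∈ univ.filter (fun t : ∀ i, S i => t l = x), πW t ≤ 0 := by
    refine Finset.sum_nonpos fun t ht => ?_
    rcases (hdist.1 t).lt_or_eq with h | h
    · exact absurd (Finset.mem_filter.mp ht).2 (hcon t h)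
    · exact le_of_eq h.symm
  rw [hrep l x] at h0
  linarith

lemma exists_other (hρ : IsPCF ρ) {l : Fin n} {x0 : S l} (h : ρ l x0 < 1) :
    ∃ x, x ≠ x0 ∧ 0 < ρ l x := by
  by_contra hcon
  push_neg at hcon
  have hz : ∀ b : S l, b ∈ (univ : Finset (S l)) → b ≠ x0 → ρ l b = 0 := by
    intro b _ hb
    exact le_antisymm (hcon b hb) (hρ.1 l b)
  have := Finset.sum_eq_single_of_mem (f := ρ l) x0 (Finset.mem_univ x0) hz
  rw [hρ.2 l] at this
  linarith

lemma supp_le_sbar (hdist : IsDist πW) (hrep : Represents πW ρ) (sbar : ∀ i, S i)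
    (hsbar : ∀ i, 0 < ρ i (sbar i) ∧ ∀ x : S i, 0 < ρ i x → x ≤ sbar i)
    {δ : ∀ i, S i} (hδ : 0 < πW δ) (l : Fin n) : δ l ≤ sbar l :=
  (hsbar l).2 _ (rho_pos_of_supp ρ πW hdist hrep hδ l)

lemma sund_le_supp (hdist : IsDist πW) (hrep : Represents πW ρ) (sund : ∀ i, S i)
    (hsund : ∀ i, 0 < ρ i (sund i) ∧ ∀ x : S i, 0 < ρ i x → sund i ≤ x)
    {δ : ∀ i, S i} (hδ : 0 < πW δ) (l : Fin n) : sund l ≤ δ l :=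
  (hsund l).2 _ (rho_pos_of_supp ρ πW hdist hrep hδ l)

lemma cdf_supp_eq (hdist : IsDist πW)
    (hcdf : ∀ s : ∀ i, S i, cdfLe πW s = max (∑ i, cumul ρ i (s i) + 1 - (n : ℝ)) 0)
    {s : ∀ i, S i} (hs : 0 < πW s) :
    cdfLe πW s = ∑ i, cumul ρ i (s i) + 1 - (n : ℝ) := by
  have h1 : πW s ≤ cdfLe πW s := by
    refine Finset.single_le_sum (fun t _ => hdist.1 t) ?_
    simp
  rw [hcdf] at h1 ⊢
  rcases le_or_gt (∑ i, cumul ρ i (s i) + 1 - (n : ℝ)) 0 with h | h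
  · rw [max_eq_right h] at h1
    linarith
  · exact max_eq_left h.le

/-- The key structural fact: a support point can exceed another choice type whose
down-set has positive mass in at most one coordinate. -/
lemma star_lemma (hdist : IsDist πW) (hrep : Represents πW ρ)
    (hcdf : ∀ s : ∀ i, S i, cdfLe πW s = max (∑ i, cumul ρ i (s i) + 1 - (n : ℝ)) 0)
    {s t : ∀ i, S i} (hs : 0 < πW s) (ht : 0 < πW t)
    {l m : Fin n} (hl : s l < t l) (hm : s m < t m) : l = m := by
  classical
  by_contra hlm
  have key1 : ∑ l' : Fin n, ∑ t' ∈ univ.filter (fun t' : ∀ i, S i => s l' < t' l'), πW t'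
      = ∑ t' : ∀ i, S i,
          ((univ.filter fun l' : Fin n => s l' < t' l').card : ℝ) * πW t' := by
    simp_rw [Finset.sum_filter]
    rw [Finset.sum_comm]
    refine Finset.sum_congr rfl fun t' _ => ?_
    rw [← Finset.sum_filter, Finset.sum_const, nsmul_eq_mul]
  have key2 : ∀ l' : Fin n, ∑ t' ∈ univ.filter (fun t' : ∀ i, S i => s l' < t' l'), πW t'
      = 1 - cumul ρ l' (s l') := by
    intro l'
    have hsplit := Finset.sum_filter_add_sum_filter_not (univ : Finset (∀ i, S i))
      (fun t' => t' l' ≤ s l') πW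
    rw [fiber_sum_le ρ πW hrep l' (s l'), hdist.2] at hsplit
    have heq : univ.filter (fun t' : ∀ i, S i => ¬ t' l' ≤ s l')
        = univ.filter (fun t' : ∀ i, S i => s l' < t' l') := by
      apply Finset.filter_congr
      intro t' _
      simp [not_le]
    rw [heq] at hsplit
    linarith
  have key3 : ∑ l' : Fin n, (1 - cumul ρ l' (s l')) = 1 - cdfLe πW s := by
    rw [cdf_supp_eq ρ πW hdist hcdf hs, Finset.sum_sub_distrib, Finset.sum_const,
      Finset.card_univ, Fintype.card_fin, nsmul_eq_mul, mul_one]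
    ring
  have key4 : 1 - cdfLe πW s
      = ∑ t' ∈ univ.filter (fun t' : ∀ i, S i => ¬ ∀ i, t' i ≤ s i), πW t' := by
    have hsplit := Finset.sum_filter_add_sum_filter_not (univ : Finset (∀ i, S i))
      (fun t' => ∀ i, t' i ≤ s i) πW
    rw [hdist.2] at hsplit
    have hd : cdfLe πW s
        = ∑ t' ∈ univ.filter (fun t' : ∀ i, S i => ∀ i, t' i ≤ s i), πW t' := rfl
    rw [hd]
    linarith
  have main : ∑ t' : ∀ i, S i,
        ((univ.filter fun l' : Fin n => s l' < t' l').card : ℝ) * πW t'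
      = ∑ t' ∈ univ.filter (fun t' : ∀ i, S i => ¬ ∀ i, t' i ≤ s i), πW t' := by
    rw [← key1, Finset.sum_congr rfl (fun l' _ => key2 l'), key3, key4]
  have hpt : ∀ t' : ∀ i, S i,
      (if ¬ ∀ i, t' i ≤ s i then πW t' else 0)
        ≤ ((univ.filter fun l' : Fin n => s l' < t' l').card : ℝ) * πW t' := by
    intro t'
    by_cases h : ∀ i, t' i ≤ s i
    · rw [if_neg (not_not_intro h)]
      exact mul_nonneg (by positivity) (hdist.1 t')
    · rw [if_pos h]
      push_neg at h
      obtain ⟨i0, hi0⟩ := h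
      have hcard : 1 ≤ (univ.filter fun l' : Fin n => s l' < t' l').card :=
        Finset.card_pos.2 ⟨i0, by simp [hi0]⟩
      calc πW t' = 1 * πW t' := (one_mul _).symm
        _ ≤ _ := by
            apply mul_le_mul_of_nonneg_right _ (hdist.1 t')
            exact_mod_cast hcard
  have hstrict : (if ¬ ∀ i, t i ≤ s i then πW t else 0)
      < ((univ.filter fun l' : Fin n => s l' < t l').card : ℝ) * πW t := by
    have h2 : 2 ≤ (univ.filter fun l' : Fin n => s l' < t l').card := by
      have hsub : ({l, m} : Finset (Fin n)) ⊆ univ.filter fun l' : Fin n => s l' < t l' := by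
        intro a ha
        simp only [Finset.mem_insert, Finset.mem_singleton] at ha
        rcases ha with rfl | rfl <;> simp [hl, hm]
      calc 2 = ({l, m} : Finset (Fin n)).card := (Finset.card_pair hlm).symm
        _ ≤ _ := Finset.card_le_card hsub
    have hts : ¬ ∀ i, t i ≤ s i := fun h => absurd (h l) (not_le.2 hl)
    rw [if_pos hts]
    calc πW t = 1 * πW t := (one_mul _).symm
      _ < 2 * πW t := by linarith
      _ ≤ _ := mul_le_mul_of_nonneg_right (by exact_mod_cast h2) (hdist.1 t)
  have hsum : ∑ t' ∈ univ.filter (fun t' : ∀ i, S i => ¬ ∀ i, t' i ≤ s i), πW t'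
      < ∑ t' : ∀ i, S i,
          ((univ.filter fun l' : Fin n => s l' < t' l').card : ℝ) * πW t' := by
    rw [Finset.sum_filter]
    exact Finset.sum_lt_sum (fun t' _ => hpt t') ⟨t, Finset.mem_univ t, hstrict⟩
  rw [main] at hsum
  exact lt_irrefl _ hsum

/-- Core lemma (primal version, towards `sbar`). -/
lemma coreL (hdist : IsDist πW) (hrep : Represents πW ρ)
    (hcdf : ∀ s : ∀ i, S i, cdfLe πW s = max (∑ i, cumul ρ i (s i) + 1 - (n : ℝ)) 0)
    (sbar : ∀ i, S i)
    (hsbar : ∀ i, 0 < ρ i (sbar i) ∧ ∀ x : S i, 0 < ρ i x → x ≤ sbar i)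
    {α β γ : ∀ i, S i} (hα : 0 < πW α) (hβ : 0 < πW β) (hγ : 0 < πW γ)
    {i j k : Fin n} (hij : i ≠ j) (hki : k ≠ i) (hkj : k ≠ j)
    (hi : β i < α i) (hj : α j < β j) (hk : α k = β k) (hγk : γ k < α k) :
    α i = sbar i ∧ β j = sbar j ∧ (∀ l, l ≠ i → l ≠ j → l ≠ k → α l = sbar l) ∧
      γ i = α i ∧ γ j = β j ∧ (∀ l, l ≠ i → l ≠ j → l ≠ k → γ l = α l) ∧
      (∀ l, l ≠ i → l ≠ j → β l = α l) := by
  have star : ∀ {s t : ∀ i, S i}, 0 < πW s → 0 < πW t →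
      ∀ {l m : Fin n}, s l < t l → s m < t m → l = m :=
    by intro s t hs ht l m hl hm; exact star_lemma ρ πW hdist hrep hcdf hs ht hl hm
  have sαβ : ∀ l, l ≠ j → β l ≤ α l := fun l hl =>
    le_of_not_gt fun h => hl (star hα hβ h hj)
  have sβα : ∀ l, l ≠ i → α l ≤ β l := fun l hl =>
    le_of_not_gt fun h => hl (star hβ hα h hi)
  have hβγk : γ k < β k := hk ▸ hγk
  have sγα : ∀ l, l ≠ k → α l ≤ γ l := fun l hl =>
    le_of_not_gt fun h => hl (star hγ hα h hγk)
  have sγβ : ∀ l, l ≠ k → β l ≤ γ l := fun l hl =>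
    le_of_not_gt fun h => hl (star hγ hβ h hβγk)
  have hαγj : α j < γ j := lt_of_lt_of_le hj (sγβ j (Ne.symm hkj))
  have sαγ : ∀ l, l ≠ j → γ l ≤ α l := fun l hl =>
    le_of_not_gt fun h => hl (star hα hγ h hαγj)
  have hγi : γ i = α i := le_antisymm (sαγ i hij) (sγα i (Ne.symm hki))
  have hβγi : β i < γ i := by rw [hγi]; exact hi
  have sγβ2 : ∀ l, l ≠ i → γ l ≤ β l := fun l hl =>
    le_of_not_gt fun h => hl (star hβ hγ h hβγi)
  have hγj : γ j = β j := le_antisymm (sγβ2 j (Ne.symm hij)) (sγβ j (Ne.symm hkj))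
  have hγl : ∀ l, l ≠ i → l ≠ j → l ≠ k → γ l = α l := fun l _ h2 h3 =>
    le_antisymm (sαγ l h2) (sγα l h3)
  have hβα : ∀ l, l ≠ i → l ≠ j → β l = α l := fun l h1 h2 =>
    le_antisymm (sαβ l h2) (sβα l h1)
  have ha : α i = sbar i := by
    by_contra hne
    have hlt : α i < sbar i :=
      lt_of_le_of_ne (supp_le_sbar ρ πW hdist hrep sbar hsbar hα i) hne
    obtain ⟨δ, hδ, hδi⟩ := exists_mem_supp ρ πW hdist hrep (hsbar i).1
    rw [← hδi] at hlt
    have sαδ : ∀ l, l ≠ i → δ l ≤ α l := fun l hl =>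
      le_of_not_gt fun h => hl (star hα hδ h hlt)
    have hδβj : δ j < β j := lt_of_le_of_lt (sαδ j (Ne.symm hij)) hj
    have sδβ : ∀ l, l ≠ j → β l ≤ δ l := fun l hl =>
      le_of_not_gt fun h => hl (star hδ hβ h hδβj)
    have h1 : γ k < δ k := lt_of_lt_of_le (hk ▸ hγk) (sδβ k hkj)
    have h2 : γ i < δ i := by rw [hγi]; exact hlt
    exact hki (star hγ hδ h1 h2)
  have hb : β j = sbar j := by
    by_contra hne
    have hlt : β j < sbar j :=
      lt_of_le_of_ne (supp_le_sbar ρ πW hdist hrep sbar hsbar hβ j) hne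
    obtain ⟨δ, hδ, hδj⟩ := exists_mem_supp ρ πW hdist hrep (hsbar j).1
    rw [← hδj] at hlt
    have sβδ : ∀ l, l ≠ j → δ l ≤ β l := fun l hl =>
      le_of_not_gt fun h => hl (star hβ hδ h hlt)
    have hδαi : δ i < α i := lt_of_le_of_lt (sβδ i hij) hi
    have sδα : ∀ l, l ≠ i → α l ≤ δ l := fun l hl =>
      le_of_not_gt fun h => hl (star hδ hα h hδαi)
    have h1 : γ k < δ k := lt_of_lt_of_le hγk (sδα k hki)
    have h2 : γ j < δ j := by rw [hγj]; exact hlt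
    exact hkj (star hγ hδ h1 h2)
  have hc : ∀ l, l ≠ i → l ≠ j → l ≠ k → α l = sbar l := by
    intro l0 h1 h2 h3
    by_contra hne
    have hlt : α l0 < sbar l0 :=
      lt_of_le_of_ne (supp_le_sbar ρ πW hdist hrep sbar hsbar hα l0) hne
    obtain ⟨δ, hδ, hδl⟩ := exists_mem_supp ρ πW hdist hrep (hsbar l0).1
    rw [← hδl] at hlt
    have sαδ : ∀ m, m ≠ l0 → δ m ≤ α m := fun m hm =>
      le_of_not_gt fun h => hm (star hα hδ h hlt)
    rcases lt_or_eq_of_le (sαδ k (Ne.symm h3)) with hlt2 | heq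
    · have hδβj2 : δ j < β j := lt_of_le_of_lt (sαδ j (Ne.symm h2)) hj
      have hδβk : δ k < β k := hk ▸ hlt2
      exact hkj (star hδ hβ hδβk hδβj2)
    · have h1' : γ k < δ k := by rw [heq]; exact hγk
      have h2' : γ l0 < δ l0 := by rw [hγl l0 h1 h2 h3]; exact hlt
      exact (Ne.symm h3) (star hγ hδ h1' h2')
  exact ⟨ha, hb, hc, hγi, hγj, hγl, hβα⟩

/-- Core lemma (dual version, towards `sund`). -/
lemma coreL' (hdist : IsDist πW) (hrep : Represents πW ρ)
    (hcdf : ∀ s : ∀ i, S i, cdfLe πW s = max (∑ i, cumul ρ i (s i) + 1 - (n : ℝ)) 0)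
    (sund : ∀ i, S i)
    (hsund : ∀ i, 0 < ρ i (sund i) ∧ ∀ x : S i, 0 < ρ i x → sund i ≤ x)
    {α β γ : ∀ i, S i} (hα : 0 < πW α) (hβ : 0 < πW β) (hγ : 0 < πW γ)
    {i j k : Fin n} (hij : i ≠ j) (hki : k ≠ i) (hkj : k ≠ j)
    (hi : α i < β i) (hj : β j < α j) (hk : α k = β k) (hγk : α k < γ k) :
    α i = sund i ∧ β j = sund j ∧ (∀ l, l ≠ i → l ≠ j → l ≠ k → α l = sund l) ∧
      γ i = α i ∧ γ j = β j ∧ (∀ l, l ≠ i → l ≠ j → l ≠ k → γ l = α l) ∧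
      (∀ l, l ≠ i → l ≠ j → β l = α l) := by
  have star : ∀ {s t : ∀ i, S i}, 0 < πW s → 0 < πW t →
      ∀ {l m : Fin n}, s l < t l → s m < t m → l = m :=
    by intro s t hs ht l m hl hm; exact star_lemma ρ πW hdist hrep hcdf hs ht hl hm
  have sαβ : ∀ l, l ≠ j → α l ≤ β l := fun l hl =>
    le_of_not_gt fun h => hl (star hβ hα h hj)
  have sβα : ∀ l, l ≠ i → β l ≤ α l := fun l hl =>
    le_of_not_gt fun h => hl (star hα hβ h hi)
  have hβγk : β k < γ k := hk ▸ hγk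
  have sγα : ∀ l, l ≠ k → γ l ≤ α l := fun l hl =>
    le_of_not_gt fun h => hl (star hα hγ h hγk)
  have sγβ : ∀ l, l ≠ k → γ l ≤ β l := fun l hl =>
    le_of_not_gt fun h => hl (star hβ hγ h hβγk)
  have hαγj : γ j < α j := lt_of_le_of_lt (sγβ j (Ne.symm hkj)) hj
  have sαγ : ∀ l, l ≠ j → α l ≤ γ l := fun l hl =>
    le_of_not_gt fun h => hl (star hγ hα h hαγj)
  have hγi : γ i = α i := le_antisymm (sγα i (Ne.symm hki)) (sαγ i hij)
  have hβγi : γ i < β i := by rw [hγi]; exact hi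
  have sγβ2 : ∀ l, l ≠ i → β l ≤ γ l := fun l hl =>
    le_of_not_gt fun h => hl (star hγ hβ h hβγi)
  have hγj : γ j = β j := le_antisymm (sγβ j (Ne.symm hkj)) (sγβ2 j (Ne.symm hij))
  have hγl : ∀ l, l ≠ i → l ≠ j → l ≠ k → γ l = α l := fun l _ h2 h3 =>
    le_antisymm (sγα l h3) (sαγ l h2)
  have hβα : ∀ l, l ≠ i → l ≠ j → β l = α l := fun l h1 h2 =>
    le_antisymm (sβα l h1) (sαβ l h2)
  have ha : α i = sund i := by
    by_contra hne
    have hlt : sund i < α i :=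
      lt_of_le_of_ne (sund_le_supp ρ πW hdist hrep sund hsund hα i) (Ne.symm hne)
    obtain ⟨δ, hδ, hδi⟩ := exists_mem_supp ρ πW hdist hrep (hsund i).1
    rw [← hδi] at hlt
    have sαδ : ∀ l, l ≠ i → α l ≤ δ l := fun l hl =>
      le_of_not_gt fun h => hl (star hδ hα h hlt)
    have hδβj : β j < δ j := lt_of_lt_of_le hj (sαδ j (Ne.symm hij))
    have sδβ : ∀ l, l ≠ j → δ l ≤ β l := fun l hl =>
      le_of_not_gt fun h => hl (star hβ hδ h hδβj)
    have h1 : δ k < γ k := lt_of_le_of_lt (hk ▸ sδβ k hkj) hγk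
    have h2 : δ i < γ i := by rw [hγi]; exact hlt
    exact hki (star hδ hγ h1 h2)
  have hb : β j = sund j := by
    by_contra hne
    have hlt : sund j < β j :=
      lt_of_le_of_ne (sund_le_supp ρ πW hdist hrep sund hsund hβ j) (Ne.symm hne)
    obtain ⟨δ, hδ, hδj⟩ := exists_mem_supp ρ πW hdist hrep (hsund j).1
    rw [← hδj] at hlt
    have sβδ : ∀ l, l ≠ j → β l ≤ δ l := fun l hl =>
      le_of_not_gt fun h => hl (star hδ hβ h hlt)
    have hδαi : α i < δ i := lt_of_lt_of_le hi (sβδ i hij)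
    have sδα : ∀ l, l ≠ i → δ l ≤ α l := fun l hl =>
      le_of_not_gt fun h => hl (star hα hδ h hδαi)
    have h1 : δ k < γ k := lt_of_le_of_lt (sδα k hki) hγk
    have h2 : δ j < γ j := by rw [hγj]; exact hlt
    exact hkj (star hδ hγ h1 h2)
  have hc : ∀ l, l ≠ i → l ≠ j → l ≠ k → α l = sund l := by
    intro l0 h1 h2 h3
    by_contra hne
    have hlt : sund l0 < α l0 :=
      lt_of_le_of_ne (sund_le_supp ρ πW hdist hrep sund hsund hα l0) (Ne.symm hne)
    obtain ⟨δ, hδ, hδl⟩ := exists_mem_supp ρ πW hdist hrep (hsund l0).1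
    rw [← hδl] at hlt
    have sαδ : ∀ m, m ≠ l0 → α m ≤ δ m := fun m hm =>
      le_of_not_gt fun h => hm (star hδ hα h hlt)
    rcases lt_or_eq_of_le (sαδ k (Ne.symm h3)) with hlt2 | heq
    · have hδβj2 : β j < δ j := lt_of_lt_of_le hj (sαδ j (Ne.symm h2))
      have hδβk : β k < δ k := hk ▸ hlt2
      exact hkj (star hβ hδ hδβk hδβj2)
    · have h1' : δ k < γ k := by rw [← heq]; exact hγk
      have h2' : δ l0 < γ l0 := by rw [hγl l0 h1 h2 h3]; exact hlt
      exact (Ne.symm h3) (star hδ hγ h1' h2')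
  exact ⟨ha, hb, hc, hγi, hγj, hγl, hβα⟩

end Aux

/-- key lemma for the FH-lower-bound characterization, when condition II fails. -/
theorem FH_lower_key_lemma [∀ i, Nonempty (S i)]
    (ρ : ∀ i, S i → ℝ) (hρ : IsPCF ρ)
    (πW : (∀ i, S i) → ℝ) (hdist : IsDist πW) (hrep : Represents πW ρ)
    (hcdf : ∀ s : ∀ i, S i, cdfLe πW s = max (∑ i, cumul ρ i (s i) + 1 - (n : ℝ)) 0)
    (sbar : ∀ i, S i)
    (hsbar : ∀ i, 0 < ρ i (sbar i) ∧ ∀ x : S i, 0 < ρ i x → x ≤ sbar i)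
    (sund : ∀ i, S i)
    (hsund : ∀ i, 0 < ρ i (sund i) ∧ ∀ x : S i, 0 < ρ i x → sund i ≤ x)
    (hII : ∀ i j : Fin n, ∃ k, k ≠ i ∧ k ≠ j ∧ ∀ y : S k, ρ k y < 1)
    (α β : ∀ i, S i) (hα : 0 < πW α) (hβ : 0 < πW β)
    (i j : Fin n) (hi : β i < α i) (hj : α j < β j) :
    ∃ γ : ∀ i, S i, 0 < πW γ ∧ ∃ k : Fin n,
      γ k ≠ α k ∧ α k = β k ∧
      (γ k < α k →
        (Finset.univ.filter (fun l => α l ≠ sbar l)).card ≤ 1 ∧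
        (Finset.univ.filter (fun l => β l ≠ sbar l)).card ≤ 1) ∧
      (α k < γ k →
        (Finset.univ.filter (fun l => α l ≠ sund l)).card ≤ 1 ∧
        (Finset.univ.filter (fun l => β l ≠ sund l)).card ≤ 1) := by
  classical
  have star : ∀ {s t : ∀ i, S i}, 0 < πW s → 0 < πW t →
      ∀ {l m : Fin n}, s l < t l → s m < t m → l = m :=
    by intro s t hs ht l m hl hm; exact star_lemma ρ πW hdist hrep hcdf hs ht hl hm
  have hij : i ≠ j := by
    rintro rfl
    exact lt_asymm hi hj
  obtain ⟨k0, hk0i, hk0j, hk0nd⟩ := hII i j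
  have hk0αβ : α k0 = β k0 :=
    le_antisymm (le_of_not_gt fun h => hk0i (star hβ hα h hi))
      (le_of_not_gt fun h => hk0j (star hα hβ h hj))
  obtain ⟨x, hxne, hxpos⟩ := exists_other ρ hρ (hk0nd (α k0))
  obtain ⟨γ0, hγ0, hγ0k⟩ := exists_mem_supp ρ πW hdist hrep hxpos
  have hγ0ne : γ0 k0 ≠ α k0 := by rw [hγ0k]; exact hxne
  rcases hγ0ne.lt_or_gt with hlt | hgt
  · -- Case A : γ0 k0 < α k0, conclusions towards sbar
    obtain ⟨ha, hb, hc, hgi, hgj, hgl, hba⟩ :=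
      coreL ρ πW hdist hrep hcdf sbar hsbar hα hβ hγ0 hij hk0i hk0j hi hj hk0αβ hlt
    obtain ⟨k1, hk1k0, hk1j, hk1nd⟩ := hII k0 j
    have hαk1 : α k1 = sbar k1 := by
      rcases eq_or_ne k1 i with rfl | hk1i
      · exact ha
      · exact hc k1 hk1i hk1j hk1k0
    obtain ⟨x1, hx1ne, hx1pos⟩ := exists_other ρ hρ (hk1nd (α k1))
    obtain ⟨γ1, hγ1, hγ1k⟩ := exists_mem_supp ρ πW hdist hrep hx1pos
    have hγ1lt : γ1 k1 < α k1 := by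
      have h1 : γ1 k1 ≤ sbar k1 := supp_le_sbar ρ πW hdist hrep sbar hsbar hγ1 k1
      rw [← hαk1] at h1
      refine lt_of_le_of_ne h1 ?_
      rw [hγ1k]
      exact hx1ne
    have hαγ0k1 : α k1 = γ0 k1 := by
      rcases eq_or_ne k1 i with rfl | hk1i
      · exact hgi.symm
      · exact (hgl k1 hk1i hk1j hk1k0).symm
    have hαγ0j : α j < γ0 j := by rw [hgj]; exact hj
    obtain ⟨ha2, -, -, -, -, -, -⟩ :=
      coreL ρ πW hdist hrep hcdf sbar hsbar hα hγ0 hγ1 hk0j hk1k0 hk1j hlt hαγ0j hαγ0k1 hγ1lt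
    refine ⟨γ0, hγ0, k0, hγ0ne, hk0αβ, fun _ => ⟨?_, ?_⟩, fun h => absurd h (lt_asymm hlt)⟩
    · have hsub : univ.filter (fun l => α l ≠ sbar l) ⊆ {j} := by
        intro l hl
        simp only [Finset.mem_filter, Finset.mem_univ, true_and] at hl
        simp only [Finset.mem_singleton]
        by_contra hlj
        apply hl
        rcases eq_or_ne l i with rfl | h1
        · exact ha
        rcases eq_or_ne l k0 with rfl | h2
        · exact ha2
        exact hc l h1 hlj h2
      calc (univ.filter (fun l => α l ≠ sbar l)).card
          ≤ ({j} : Finset (Fin n)).card := Finset.card_le_card hsub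
        _ = 1 := Finset.card_singleton j
    · have hsub : univ.filter (fun l => β l ≠ sbar l) ⊆ {i} := by
        intro l hl
        simp only [Finset.mem_filter, Finset.mem_univ, true_and] at hl
        simp only [Finset.mem_singleton]
        by_contra hli
        apply hl
        rcases eq_or_ne l j with rfl | h2
        · exact hb
        rcases eq_or_ne l k0 with rfl | h3
        · rw [← hk0αβ]; exact ha2
        rw [hba l hli h2]
        exact hc l hli h2 h3
      calc (univ.filter (fun l => β l ≠ sbar l)).card
          ≤ ({i} : Finset (Fin n)).card := Finset.card_le_card hsub
        _ = 1 := Finset.card_singleton i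
  · -- Case B : α k0 < γ0 k0, conclusions towards sund
    obtain ⟨ha, hb, hc, hgi, hgj, hgl, hba⟩ :=
      coreL' ρ πW hdist hrep hcdf sund hsund hα hβ hγ0 (Ne.symm hij) hk0j hk0i hj hi hk0αβ hgt
    obtain ⟨k1, hk1k0, hk1i, hk1nd⟩ := hII k0 i
    have hαk1 : α k1 = sund k1 := by
      rcases eq_or_ne k1 j with rfl | hk1j
      · exact ha
      · exact hc k1 hk1j hk1i hk1k0
    obtain ⟨x1, hx1ne, hx1pos⟩ := exists_other ρ hρ (hk1nd (α k1))
    obtain ⟨γ1, hγ1, hγ1k⟩ := exists_mem_supp ρ πW hdist hrep hx1pos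
    have hγ1gt : α k1 < γ1 k1 := by
      have h1 : sund k1 ≤ γ1 k1 := sund_le_supp ρ πW hdist hrep sund hsund hγ1 k1
      rw [← hαk1] at h1
      refine lt_of_le_of_ne h1 ?_
      rw [hγ1k]
      exact Ne.symm hx1ne
    have hαγ0k1 : α k1 = γ0 k1 := by
      rcases eq_or_ne k1 j with rfl | hk1j
      · exact hgi.symm
      · exact (hgl k1 hk1j hk1i hk1k0).symm
    have hγ0iα : γ0 i < α i := by rw [hgj]; exact hi
    obtain ⟨ha2, -, -, -, -, -, -⟩ :=
      coreL' ρ πW hdist hrep hcdf sund hsund hα hγ0 hγ1 hk0i hk1k0 hk1i hgt hγ0iα hαγ0k1 hγ1gt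
    refine ⟨γ0, hγ0, k0, hγ0ne, hk0αβ, fun h => absurd h (lt_asymm hgt), fun _ => ⟨?_, ?_⟩⟩
    · have hsub : univ.filter (fun l => α l ≠ sund l) ⊆ {i} := by
        intro l hl
        simp only [Finset.mem_filter, Finset.mem_univ, true_and] at hl
        simp only [Finset.mem_singleton]
        by_contra hli
        apply hl
        rcases eq_or_ne l j with rfl | h1
        · exact ha
        rcases eq_or_ne l k0 with rfl | h2
        · exact ha2
        exact hc l h1 hli h2
      calc (univ.filter (fun l => α l ≠ sund l)).card
          ≤ ({i} : Finset (Fin n)).card := Finset.card_le_card hsub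
        _ = 1 := Finset.card_singleton i
    · have hsub : univ.filter (fun l => β l ≠ sund l) ⊆ {j} := by
        intro l hl
        simp only [Finset.mem_filter, Finset.mem_univ, true_and] at hl
        simp only [Finset.mem_singleton]
        by_contra hlj
        apply hl
        rcases eq_or_ne l i with rfl | h2
        · exact hb
        rcases eq_or_ne l k0 with rfl | h3
        · rw [← hk0αβ]; exact ha2
        rw [hba l hlj h2]
        exact hc l hlj h2 h3
      calc (univ.filter (fun l => β l ≠ sund l)).card
          ≤ ({j} : Finset (Fin n)).card := Finset.card_le_card hsub
        _ = 1 := Finset.card_singleton j
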